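/- Let A be a Grothendieck abelian category. For any complex C in Comp(A), C is acyclic if and only if for every object E in a fixed generating set G of A and every integer n, the group Hom_{D(A)}(E, C[n]) in the derived category vanishes. -/

import Mathlib

open CategoryTheory Limits ZeroObject

namespace AcyclicAux

lemma isIso_of_isZero {C : Type*} [Category C] [Limits.HasZeroMorphisms C] {X Y : C}
    (hX : IsZero X) (hY : IsZero Y) (f : X ⟶ Y) : IsIso f := by
  rw [hX.eq_of_src f (hX.iso hY).hom]
  infer_instance

variable {A : Type*} [Category A] [Abelian A] [HasDerivedCategory A]

omit [HasDerivedCategory A] in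
lemma hasLeftCalc :
    (HomotopyCategory.quasiIso A (ComplexShape.up ℤ)).HasLeftCalculusOfFractions := by
  rw [HomotopyCategory.quasiIso_eq_subcategoryAcyclic_W]
  infer_instance

/-- `Q` applied to a single complex agrees with the derived category single functor. -/
noncomputable def singleIso (n : ℤ) (E : A) :
    DerivedCategory.Q.obj ((HomologicalComplex.single A (ComplexShape.up ℤ) n).obj E) ≅
      (DerivedCategory.singleFunctor A n).obj E where
  hom := ((DerivedCategory.singleFunctorsPostcompQIso A).inv.hom n).app E
  inv := ((DerivedCategory.singleFunctorsPostcompQIso A).hom.hom n).app E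
  hom_inv_id := SingleFunctors.inv_hom_id_hom_app _ n E
  inv_hom_id := SingleFunctors.hom_inv_id_hom_app _ n E

lemma subsingleton_transfer (C : CochainComplex A ℤ) (E : A)
    (h : ∀ n : ℤ, Subsingleton
      ((DerivedCategory.Q.obj ((HomologicalComplex.single A (ComplexShape.up ℤ) 0).obj E)) ⟶
        (DerivedCategory.Q.obj C)⟦n⟧)) (n : ℤ) :
    Subsingleton
      ((DerivedCategory.Q.obj ((HomologicalComplex.single A (ComplexShape.up ℤ) n).obj E)) ⟶
        DerivedCategory.Q.obj C) := by
  have e2 := (DerivedCategory.singleFunctors A).shiftIso (-n) n 0 (neg_add_cancel n)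
  let i : DerivedCategory.Q.obj ((HomologicalComplex.single A (ComplexShape.up ℤ) n).obj E) ≅
      (shiftFunctor (DerivedCategory A) (-n)).obj
        (DerivedCategory.Q.obj ((HomologicalComplex.single A (ComplexShape.up ℤ) 0).obj E)) :=
    singleIso n E ≪≫ (e2.app E).symm ≪≫
      (shiftFunctor (DerivedCategory A) (-n)).mapIso (singleIso 0 E).symm
  have e3 := (shiftEquiv (DerivedCategory A) (-n)).toAdjunction.homEquiv
    (DerivedCategory.Q.obj ((HomologicalComplex.single A (ComplexShape.up ℤ) 0).obj E))
    (DerivedCategory.Q.obj C)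
  haveI : Subsingleton
      ((DerivedCategory.Q.obj ((HomologicalComplex.single A (ComplexShape.up ℤ) 0).obj E)) ⟶
        (shiftEquiv (DerivedCategory A) (-n)).inverse.obj (DerivedCategory.Q.obj C)) :=
    h (-(-n))
  exact ((i.homCongr (Iso.refl _)).trans e3).subsingleton

end AcyclicAux

/-- in a Grothendieck abelian category `A` with generating set `G`, a complex `C`
is acyclic iff for every `E` in `G` and every integer `n`, `Hom_{D(A)}(E, C[n]) = 0`. -/
theorem acyclic_iff_hom_derived_vanishes {A : Type*} [Category A] [Abelian A]
    [HasFilteredColimits A] [AB5 A] [HasDerivedCategory A]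
    (G : Set A) (hG : ObjectProperty.IsSeparating G) (C : CochainComplex A ℤ) :
    (∀ n : ℤ, IsZero (C.homology n)) ↔
      ∀ E ∈ G, ∀ n : ℤ,
        Subsingleton
          ((DerivedCategory.Q.obj ((HomologicalComplex.single A (ComplexShape.up ℤ) 0).obj E)) ⟶
            (DerivedCategory.Q.obj C)⟦n⟧) := by
  constructor
  · intro hz E _ n
    have hq : QuasiIso (0 : C ⟶ (0 : CochainComplex A ℤ)) := by
      rw [quasiIso_iff]
      intro i
      rw [quasiIsoAt_iff_isIso_homologyMap]
      exact AcyclicAux.isIso_of_isZero (hz i)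
        ((HomologicalComplex.homologyFunctor A (ComplexShape.up ℤ) i).map_isZero
          (isZero_zero _)) _
    have : IsIso (DerivedCategory.Q.map (0 : C ⟶ (0 : CochainComplex A ℤ))) :=
      (HomologicalComplexUpToQuasiIso.isIso_Q_map_iff_mem_quasiIso
        (0 : C ⟶ (0 : CochainComplex A ℤ))).2
        ((HomologicalComplex.mem_quasiIso_iff _).2 hq)
    have h0 : IsZero (DerivedCategory.Q.obj (0 : CochainComplex A ℤ)) :=
      DerivedCategory.Q.map_isZero (isZero_zero _)
    have hzQ : IsZero (DerivedCategory.Q.obj C) :=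
      h0.of_iso (asIso (DerivedCategory.Q.map (0 : C ⟶ (0 : CochainComplex A ℤ))))
    have hzs : IsZero ((DerivedCategory.Q.obj C)⟦n⟧) :=
      (shiftFunctor (DerivedCategory A) n).map_isZero hzQ
    exact ⟨fun a b => hzs.eq_of_tgt a b⟩
  · intro hyp n
    haveI := AcyclicAux.hasLeftCalc (A := A)
    have key : ∀ E ∈ G, ∀ (h : E ⟶ C.cycles n), h ≫ C.homologyπ n = 0 := by
      intro E hE h
      have hφd : ∀ k, (ComplexShape.up ℤ).Rel n k → (h ≫ C.iCycles n) ≫ C.d n k = 0 :=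
        fun k _ => by simp
      set v : (HomologicalComplex.single A (ComplexShape.up ℤ) n).obj E ⟶ C :=
        HomologicalComplex.mkHomFromSingle (h ≫ C.iCycles n) hφd with hv
      haveI hsub := AcyclicAux.subsingleton_transfer C E (fun m => hyp E hE m) n
      have hQv : DerivedCategory.Q.map v = 0 := Subsingleton.elim _ _
      have hQh : DerivedCategory.Qh.map
          ((HomotopyCategory.quotient A (ComplexShape.up ℤ)).map v) = 0 := by
        rw [← cancel_mono ((DerivedCategory.quotientCompQhIso A).hom.app C), zero_comp]
        have hnat := (DerivedCategory.quotientCompQhIso A).hom.naturality v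
        dsimp only [Functor.comp_map] at hnat
        rw [hnat, hQv, comp_zero]
      rw [show (0 : DerivedCategory.Qh.obj ((HomotopyCategory.quotient A
            (ComplexShape.up ℤ)).obj ((HomologicalComplex.single A
              (ComplexShape.up ℤ) n).obj E)) ⟶ DerivedCategory.Qh.obj
            ((HomotopyCategory.quotient A (ComplexShape.up ℤ)).obj C)) =
          DerivedCategory.Qh.map 0 from (DerivedCategory.Qh.map_zero _ _).symm,
        MorphismProperty.map_eq_iff_postcomp DerivedCategory.Qh
          (HomotopyCategory.quasiIso A (ComplexShape.up ℤ))] at hQh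
      obtain ⟨W, s, hs, fac⟩ := hQh
      obtain ⟨t, ht⟩ := (HomotopyCategory.quotient A (ComplexShape.up ℤ)).map_surjective
        (X := C) (Y := W.as) s
      rw [← ht] at hs
      have hs := (HomotopyCategory.quotient_map_mem_quasiIso_iff t).1 hs
      have hqt : QuasiIso t := (HomologicalComplex.mem_quasiIso_iff t).1 hs
      have fac' : (HomotopyCategory.quotient A (ComplexShape.up ℤ)).map (v ≫ t) =
          (HomotopyCategory.quotient A (ComplexShape.up ℤ)).map 0 := by
        rw [Functor.map_comp, ht]
        refine fac.trans ?_
        simp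
        rfl
      have H := HomotopyCategory.homotopyOfEq _ _ fac'
      have hiso : IsIso (HomologicalComplex.homologyMap t n) := by
        have hat : QuasiIsoAt t n := (quasiIso_iff t).1 hqt n
        rwa [quasiIsoAt_iff_isIso_homologyMap] at hat
      rw [← cancel_mono (HomologicalComplex.homologyMap t n), zero_comp, Category.assoc,
        HomologicalComplex.homologyπ_naturality, ← Category.assoc]
      have hcomm := H.comm n
      rw [prevD_eq H.hom (show (ComplexShape.up ℤ).Rel (n-1) n by simp),
        dNext_eq H.hom (show (ComplexShape.up ℤ).Rel n (n+1) by simp)] at hcomm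
      simp only [HomologicalComplex.single_obj_d, zero_comp, add_zero, zero_add,
        HomologicalComplex.comp_f, HomologicalComplex.zero_f] at hcomm
      -- hcomm : v.f n ≫ t.f n = H.hom n (n-1) ≫ (W.as).d (n-1) n
      have heq : h ≫ HomologicalComplex.cyclesMap t n =
          ((HomologicalComplex.singleObjXSelf (ComplexShape.up ℤ) n E).inv ≫ H.hom n (n-1)) ≫
            (W.as).toCycles (n-1) n := by
        rw [← cancel_mono ((W.as).iCycles n), Category.assoc, Category.assoc,
          HomologicalComplex.cyclesMap_i, HomologicalComplex.toCycles_i]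
        have hf : v.f n =
            (HomologicalComplex.singleObjXSelf (ComplexShape.up ℤ) n E).hom ≫
              (h ≫ C.iCycles n) := HomologicalComplex.mkHomFromSingle_f _ _
        conv_rhs => rw [Category.assoc, ← hcomm, hf]
        simp
      rw [heq, Category.assoc, HomologicalComplex.toCycles_comp_homologyπ, comp_zero]
    have hπ : C.homologyπ n = 0 := by
      refine hG _ _ (fun E hE h => ?_)
      rw [key E hE h, comp_zero]
    rw [IsZero.iff_id_eq_zero, ← cancel_epi (C.homologyπ n), hπ]
    simp
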